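/- Let T ≥ 0, let ρ : {0,…,T} → ℝ be a finite real sequence, and let N ≥ 2 be the number of time steps contained in the interval [0,b]. Define the stlcg recursion for □_{[0,b]}: the hidden state h_i ∈ ℝ^{N−1} is initialized with every entry equal to ρ_T; at step i the output is o_{T−i} = min(h_{i,1},…,h_{i,N−1}, ρ_{T−i}), and the next hidden state is the shift h_{i+1} = (h_{i,2},…,h_{i,N−1}, ρ_{T−i}). Then for every index j with 0 ≤ j ≤ T, o_j = min_{j ≤ k ≤ j+N−1} ρ_{min(k,T)}, i.e., replacing max by min in the Eventually recursion yields the sliding-window minimum with last-value padding, which is the robustness ρ(s_{t_j}, □_{[0,b]} φ). -/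

import Mathlib

/-- Correctness of the `stlcg` recursion for `□_{[0,b]}` with `N ≥ 2` time steps in
`[0,b]`: it is identical to the `◊_{[0,b]}` recursion with `max` replaced by `min`.
The hidden state `h i` has entries indexed `1,…,N-1`, initialized to `ρ T`; at step `i`
the output is `o (T-i) = min (min_{1≤k≤N-1} h i k) (ρ (T-i))` and the hidden state is
shifted with `ρ (T-i)` entering at the end. Then for every `j ≤ T`, `o j` equals the
sliding-window minimum `min_{j ≤ k ≤ j+N-1} ρ (min k T)` of length `N` with last-value
padding, i.e. the robustness `ρ(s_{t_j}, □_{[0,b]} φ)`. -/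
theorem stlcg_always_bounded (T N : ℕ) (hN : 2 ≤ N) (ρ o : ℕ → ℝ) (h : ℕ → ℕ → ℝ)
    (hinit : ∀ k, 1 ≤ k → k ≤ N - 1 → h 0 k = ρ T)
    (hout : ∀ i, i ≤ T →
      o (T - i) = min ((Finset.Icc 1 (N - 1)).inf' (Finset.nonempty_Icc.mpr (by omega)) (h i))
        (ρ (T - i)))
    (hshift : ∀ i, i ≤ T → ∀ k, 1 ≤ k → k ≤ N - 2 → h (i + 1) k = h i (k + 1))
    (hlast : ∀ i, i ≤ T → h (i + 1) (N - 1) = ρ (T - i)) :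
    ∀ j, j ≤ T →
      o j = (Finset.Icc j (j + N - 1)).inf' (Finset.nonempty_Icc.mpr (by omega))
        (fun k => ρ (min k T)) := by
  -- closed form for the hidden state
  have hval : ∀ i, i ≤ T → ∀ k, 1 ≤ k → k ≤ N - 1 →
      h i k = ρ (min (T - i + (N - k)) T) := by
    intro i
    induction i with
    | zero =>
      intro _ k hk1 hk2
      rw [hinit k hk1 hk2]
      congr 1
      omega
    | succ i ih =>
      intro hi k hk1 hk2
      rcases eq_or_lt_of_le hk2 with hk | hk
      · rw [hk, hlast i (by omega)]
        congr 1
        omega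
      · have hk2' : k ≤ N - 2 := by omega
        rw [hshift i (by omega) k hk1 hk2', ih (by omega) (k + 1) (by omega) (by omega)]
        congr 1
        omega
  intro j hj
  have hji : T - (T - j) = j := by omega
  have := hout (T - j) (by omega)
  rw [hji] at this
  rw [this]
  apply le_antisymm
  · apply Finset.le_inf'
    intro m hm
    simp only [Finset.mem_Icc] at hm
    rcases eq_or_lt_of_le hm.1 with hmj | hmj
    · have : min m T = j := by omega
      rw [this]
      exact min_le_right _ _
    · refine le_trans (min_le_left _ _) ?_
      have hmem : N - (m - j) ∈ Finset.Icc 1 (N - 1) := by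
        simp only [Finset.mem_Icc]; omega
      refine le_trans (Finset.inf'_le _ hmem) ?_
      rw [hval (T - j) (by omega) (N - (m - j)) (by omega) (by omega)]
      have : T - (T - j) + (N - (N - (m - j))) = m := by omega
      rw [this]
  · apply le_min
    · apply Finset.le_inf'
      intro k hk
      simp only [Finset.mem_Icc] at hk
      rw [hval (T - j) (by omega) k hk.1 hk.2]
      have hmem : j + (N - k) ∈ Finset.Icc j (j + N - 1) := by
        simp only [Finset.mem_Icc]; omega
      have := Finset.inf'_le (fun m => ρ (min m T)) hmem
      refine le_trans this ?_
      have : T - (T - j) + (N - k) = j + (N - k) := by omega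
      rw [this]
    · have hmem : j ∈ Finset.Icc j (j + N - 1) := by
        simp only [Finset.mem_Icc]; omega
      have := Finset.inf'_le (fun m => ρ (min m T)) hmem
      simpa only [min_eq_left hj] using this
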